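/- Let n be a positive integer and g a nonnegative integer with gcd(n,g)=1. Then the spectral norm of the g-circulant matrix C_{n,g}(F) with first row (F_1,F_2,…,F_n) equals F_{n+2} − 1. -/

import Mathlib

/-- The `g`-circulant matrix of size `n` with first row `(a 0, a 1, …, a (n-1))`:
its `(i,j)` entry (0-indexed) equals `a ((j - i*g) mod n)`. -/
def gCirc {α : Type*} (n g : ℕ) (a : ℕ → α) : Matrix (Fin n) (Fin n) α :=
  Matrix.of fun i j => a ((j.val + (n - (i.val * g) % n)) % n)

/-- The spectral norm (operator 2-norm) of a real square matrix. -/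
noncomputable def matSpectralNorm {n : ℕ} (A : Matrix (Fin n) (Fin n) ℝ) : ℝ :=
  ‖Matrix.toEuclideanCLM (𝕜 := ℝ) A‖

lemma toEuclideanCLM_apply_coord {n : ℕ} (A : Matrix (Fin n) (Fin n) ℝ)
    (x : EuclideanSpace ℝ (Fin n)) (i : Fin n) :
    (Matrix.toEuclideanCLM (𝕜 := ℝ) A) x i = ∑ j, A i j * x j := by
  have h := congrFun (Matrix.ofLp_toEuclideanCLM A x) i
  simpa [Matrix.toLin'_apply, Matrix.mulVec, dotProduct] using h

/-- Spectral norm of a nonnegative matrix with all row and column sums equal to `S`. -/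
lemma norm_toEuclideanCLM_of_row_col_sum {n : ℕ} (hn : 0 < n)
    (A : Matrix (Fin n) (Fin n) ℝ) (S : ℝ)
    (h0 : ∀ i j, 0 ≤ A i j)
    (hrow : ∀ i, ∑ j, A i j = S) (hcol : ∀ j, ∑ i, A i j = S) :
    ‖Matrix.toEuclideanCLM (𝕜 := ℝ) A‖ = S := by
  have hS : 0 ≤ S := by
    rw [← hrow ⟨0, hn⟩]
    exact Finset.sum_nonneg fun j _ => h0 _ j
  apply le_antisymm
  · apply ContinuousLinearMap.opNorm_le_bound _ hS
    intro x
    have hx2 : ‖x‖ ^ 2 = ∑ j, x j ^ 2 := by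
      rw [EuclideanSpace.norm_eq, Real.sq_sqrt]
      · simp [Real.norm_eq_abs, sq_abs]
      · exact Finset.sum_nonneg fun j _ => sq_nonneg _
    have key : ∑ i, ((Matrix.toEuclideanCLM (𝕜 := ℝ) A) x i) ^ 2 ≤ (S * ‖x‖) ^ 2 := by
      have step1 : ∀ i, ((Matrix.toEuclideanCLM (𝕜 := ℝ) A) x i) ^ 2 ≤
          S * ∑ j, A i j * x j ^ 2 := by
        intro i
        rw [toEuclideanCLM_apply_coord]
        have cs := Finset.sum_mul_sq_le_sq_mul_sq Finset.univ
          (fun j => Real.sqrt (A i j)) (fun j => Real.sqrt (A i j) * x j)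
        have e1 : ∀ j : Fin n, Real.sqrt (A i j) * (Real.sqrt (A i j) * x j)
            = A i j * x j := by
          intro j
          rw [← mul_assoc, Real.mul_self_sqrt (h0 i j)]
        have e2 : ∀ j : Fin n, Real.sqrt (A i j) ^ 2 = A i j := fun j =>
          Real.sq_sqrt (h0 i j)
        have e3 : ∀ j : Fin n, (Real.sqrt (A i j) * x j) ^ 2 = A i j * x j ^ 2 := by
          intro j
          rw [mul_pow, e2]
        simp only [e1, e2, e3] at cs
        calc (∑ j, A i j * x j) ^ 2 ≤ (∑ j, A i j) * ∑ j, A i j * x j ^ 2 := cs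
          _ = S * ∑ j, A i j * x j ^ 2 := by rw [hrow]
      calc ∑ i, ((Matrix.toEuclideanCLM (𝕜 := ℝ) A) x i) ^ 2
          ≤ ∑ i, S * ∑ j, A i j * x j ^ 2 :=
            Finset.sum_le_sum fun i _ => step1 i
        _ = S * ∑ j, (∑ i, A i j) * x j ^ 2 := by
            rw [← Finset.mul_sum, Finset.sum_comm]
            congr 1
            refine Finset.sum_congr rfl fun j _ => ?_
            rw [Finset.sum_mul]
        _ = S * (S * ∑ j, x j ^ 2) := by
            congr 1
            rw [Finset.mul_sum]
            exact Finset.sum_congr rfl fun j _ => by rw [hcol]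
        _ = (S * ‖x‖) ^ 2 := by rw [← hx2]; ring
    rw [EuclideanSpace.norm_eq]
    have : ∑ i, ‖(Matrix.toEuclideanCLM (𝕜 := ℝ) A) x i‖ ^ 2
        = ∑ i, ((Matrix.toEuclideanCLM (𝕜 := ℝ) A) x i) ^ 2 := by
      simp [Real.norm_eq_abs, sq_abs]
    rw [this]
    calc Real.sqrt (∑ i, ((Matrix.toEuclideanCLM (𝕜 := ℝ) A) x i) ^ 2)
        ≤ Real.sqrt ((S * ‖x‖) ^ 2) := Real.sqrt_le_sqrt key
      _ = S * ‖x‖ := Real.sqrt_sq (by positivity)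
  · -- lower bound via the all-ones vector
    set y : EuclideanSpace ℝ (Fin n) := (WithLp.equiv 2 (Fin n → ℝ)).symm (fun _ => 1) with hy
    have hyc : ∀ i : Fin n, y i = 1 := fun i => rfl
    have hny : ‖y‖ = Real.sqrt n := by
      rw [EuclideanSpace.norm_eq]
      simp [hyc]
    have hAy : ∀ i : Fin n, (Matrix.toEuclideanCLM (𝕜 := ℝ) A) y i = S := by
      intro i
      rw [toEuclideanCLM_apply_coord]
      simp only [hyc, mul_one]
      exact hrow i
    have hnAy : ‖(Matrix.toEuclideanCLM (𝕜 := ℝ) A) y‖ = Real.sqrt n * S := by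
      rw [EuclideanSpace.norm_eq]
      simp only [hAy]
      rw [Finset.sum_const, Finset.card_univ, Fintype.card_fin]
      rw [Real.norm_eq_abs, sq_abs, nsmul_eq_mul]
      rw [Real.sqrt_mul (by positivity)]
      rw [Real.sqrt_sq hS]
    have hle := (Matrix.toEuclideanCLM (𝕜 := ℝ) A).le_opNorm y
    rw [hnAy, hny] at hle
    have hsn : (0 : ℝ) < Real.sqrt n := Real.sqrt_pos.mpr (by exact_mod_cast hn)
    nlinarith [hle, hsn]

/-- Spectral norm of the g-circulant matrix of Fibonacci numbers. -/
theorem spectralNorm_gCirc_fib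
    (n r : ℕ) (hn : 0 < n) (hgcd : Nat.gcd n r = 1) :
    matSpectralNorm (gCirc n r (fun m => (Nat.fib (m + 1) : ℝ))) =
      (Nat.fib (n + 2) : ℝ) - 1 := by
  haveI : NeZero n := ⟨hn.ne'⟩
  set a : ℕ → ℝ := fun m => (Nat.fib (m + 1) : ℝ) with ha
  set A := gCirc n r a with hA
  open Fin.NatCast in set r' : Fin n := (r : Fin n) with hr'
  -- entry formula in terms of Fin arithmetic
  have hentry : ∀ i j : Fin n, A i j = a ((j - i * r').val) := by
    intro i j
    have h1 : (i * r').val = (i.val * r) % n := by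
      rw [Fin.mul_def]
      simp only [hr', Fin.val_natCast]
      exact Nat.mul_mod_mod _ _ _
    rw [Fin.sub_def]
    simp only [hA, gCirc, Matrix.of_apply, h1]
    congr 1
    rw [Nat.add_comm]
  -- the common value of row and column sums
  set S : ℝ := ∑ k : Fin n, a k.val with hSdef
  have hrow : ∀ i, ∑ j, A i j = S := by
    intro i
    simp only [hentry]
    calc ∑ j : Fin n, a ((j - i * r').val)
        = ∑ j : Fin n, (fun k : Fin n => a k.val) (Equiv.subRight (i * r') j) := by
          rfl
      _ = S := Equiv.sum_comp (Equiv.subRight (i * r')) (fun k : Fin n => a k.val)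
  have hcol : ∀ j, ∑ i, A i j = S := by
    intro j
    simp only [hentry]
    have hinj : Function.Injective (fun i : Fin n => j - i * r') := by
      intro i1 i2 h
      have h2 : i1 * r' = i2 * r' := sub_right_injective h
      have h3 : (i1.val * r) % n = (i2.val * r) % n := by
        have e1 : (i1 * r').val = (i1.val * r) % n := by
          rw [Fin.mul_def]; simp only [hr', Fin.val_natCast]; exact Nat.mul_mod_mod _ _ _
        have e2 : (i2 * r').val = (i2.val * r) % n := by
          rw [Fin.mul_def]; simp only [hr', Fin.val_natCast]; exact Nat.mul_mod_mod _ _ _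
        rw [← e1, ← e2, h2]
      have h4 : i1.val ≡ i2.val [MOD n] := by
        refine Nat.ModEq.cancel_right_of_coprime ?_ h3
        simpa [Nat.gcd_comm] using hgcd
      have h5 : i1.val = i2.val := by
        have := h4
        unfold Nat.ModEq at this
        rwa [Nat.mod_eq_of_lt i1.isLt, Nat.mod_eq_of_lt i2.isLt] at this
      exact Fin.ext h5
    have hbij := Finite.injective_iff_bijective.mp hinj
    exact hbij.sum_comp (fun k : Fin n => a k.val)
  have hnonneg : ∀ i j, 0 ≤ A i j := by
    intro i j
    simp only [hA, gCirc, Matrix.of_apply, ha]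
    positivity
  have hSval : S = (Nat.fib (n + 2) : ℝ) - 1 := by
    rw [hSdef, ha]
    rw [Fin.sum_univ_eq_sum_range (fun k => (Nat.fib (k + 1) : ℝ)) n]
    have hnat : (∑ k ∈ Finset.range n, Nat.fib (k + 1)) + 1 = Nat.fib (n + 2) := by
      have h1 : Nat.fib (n + 2) = (∑ k ∈ Finset.range (n + 1), Nat.fib k) + 1 :=
        Nat.fib_succ_eq_succ_sum (n + 1)
      have h2 := Finset.sum_range_succ' Nat.fib n
      simp only [Nat.fib_zero, add_zero] at h2
      omega
    have := congrArg (fun k : ℕ => (k : ℝ)) hnat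
    push_cast at this ⊢
    linarith
  rw [matSpectralNorm, norm_toEuclideanCLM_of_row_col_sum hn A S hnonneg hrow hcol, hSval]
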